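/- arXiv:2310.20536 — 2 statements merged into one kernel-verified Lean document; each statement's English description precedes it below -/
import Mathlib

section
/- Consider a sequence of nonnegative numbers defined by the recurrence $a_1 \le \frac{N}{n_1} + \frac{M}{n_1^2}$ and $a_\ell \le a_{\ell-1} b_{\ell-1} + \frac{M}{n_\ell^2}$ for $2 \le \ell \le k$, where $n_\ell = n_{\ell-1}/b_{\ell-1}$ for positive reals $b_\ell \ge 1$ and $n_\ell \ge 2$ for all $\ell$, and additionally $\sum_{i=1}^{\ell} \frac{1}{n_i} \le 1$ for all $\ell \le k$. Then for every $\ell \le k$, $a_\ell \le \frac{N}{n_\ell} + \frac{M}{n_\ell}$, and consequently $\sum_{\ell=1}^{k} a_\ell n_\ell \le k(N + M)$. -/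
/-- rehashing-cost recurrence: if `a 1 ≤ N/n 1 + M/(n 1)²`,
`a ℓ ≤ a (ℓ-1) · b (ℓ-1) + M/(n ℓ)²` with `n ℓ = n (ℓ-1)/b (ℓ-1)`, `b ℓ ≥ 1`,
`n ℓ ≥ 2`, and `∑_{i≤ℓ} 1/n i ≤ 1`, then `a ℓ ≤ N/n ℓ + M/n ℓ` for all `ℓ ≤ k`,
and consequently `∑_{ℓ=1}^k a ℓ · n ℓ ≤ k (N + M)`. -/
theorem stmt_16 (k : ℕ) (hk : 1 ≤ k) (N M : ℝ) (hN : 0 ≤ N) (hM : 0 ≤ M)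
    (a n b : ℕ → ℝ)
    (ha0 : ∀ ℓ, 0 ≤ a ℓ)
    (hb : ∀ ℓ, 1 ≤ b ℓ)
    (hn2 : ∀ ℓ, 1 ≤ ℓ → ℓ ≤ k → 2 ≤ n ℓ)
    (hnrec : ∀ ℓ, 2 ≤ ℓ → ℓ ≤ k → n ℓ = n (ℓ - 1) / b (ℓ - 1))
    (ha1 : a 1 ≤ N / n 1 + M / (n 1) ^ 2)
    (harec : ∀ ℓ, 2 ≤ ℓ → ℓ ≤ k → a ℓ ≤ a (ℓ - 1) * b (ℓ - 1) + M / (n ℓ) ^ 2)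
    (hsum : ∀ ℓ, ℓ ≤ k → ∑ i ∈ Finset.Icc 1 ℓ, 1 / n i ≤ 1) :
    (∀ ℓ, 1 ≤ ℓ → ℓ ≤ k → a ℓ ≤ N / n ℓ + M / n ℓ) ∧
    ∑ ℓ ∈ Finset.Icc 1 k, a ℓ * n ℓ ≤ (k : ℝ) * (N + M) := by
  have hnpos : ∀ ℓ, 1 ≤ ℓ → ℓ ≤ k → (0:ℝ) < n ℓ := fun ℓ h1 h2 =>
    lt_of_lt_of_le (by norm_num) (hn2 ℓ h1 h2)
  -- key induction
  have key : ∀ ℓ, 1 ≤ ℓ → ℓ ≤ k →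
      a ℓ ≤ N / n ℓ + M / n ℓ * ∑ i ∈ Finset.Icc 1 ℓ, 1 / n i := by
    intro ℓ
    induction ℓ with
    | zero => intro h; omega
    | succ m ih =>
      intro _ hlk
      rcases Nat.eq_zero_or_pos m with hm0 | hm1
      · subst hm0
        have he : M / n 1 * (1 / n 1) = M / n 1 ^ 2 := by ring
        simp only [Finset.Icc_self, Finset.sum_singleton]
        linarith
      · have hmk : m ≤ k := le_of_lt (Nat.lt_of_succ_le hlk)
        have ihm := ih hm1 hmk
        have h2 : 2 ≤ m + 1 := by omega
        have hnp : (0:ℝ) < n m := hnpos m hm1 hmk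
        have hnp1 : (0:ℝ) < n (m+1) := hnpos (m+1) (by omega) hlk
        have hbp : (0:ℝ) < b m := lt_of_lt_of_le one_pos (hb m)
        have hnr : n (m+1) = n m / b m := by simpa using hnrec (m+1) h2 hlk
        have hbe : b m = n m / n (m+1) := by
          field_simp at hnr ⊢; linarith [hnr]
        have har : a (m+1) ≤ a m * b m + M / (n (m+1))^2 := by
          simpa using harec (m+1) h2 hlk
        have step : a m * b m ≤ (N / n m + M / n m * ∑ i ∈ Finset.Icc 1 m, 1 / n i) * b m :=
          mul_le_mul_of_nonneg_right ihm (le_of_lt hbp)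
        rw [Finset.sum_Icc_succ_top (by omega : 1 ≤ m + 1)]
        have heq : (N / n m + M / n m * ∑ i ∈ Finset.Icc 1 m, 1 / n i) * b m
            + M / (n (m+1))^2
            = N / n (m+1) + M / n (m+1) * ((∑ i ∈ Finset.Icc 1 m, 1 / n i) + 1 / n (m+1)) := by
          rw [hbe]
          field_simp
          ring
        linarith
  have main : ∀ ℓ, 1 ≤ ℓ → ℓ ≤ k → a ℓ ≤ N / n ℓ + M / n ℓ := by
    intro ℓ h1 h2
    have := key ℓ h1 h2
    have hMn : 0 ≤ M / n ℓ := div_nonneg hM (le_of_lt (hnpos ℓ h1 h2))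
    have := mul_le_mul_of_nonneg_left (hsum ℓ h2) hMn
    linarith
  refine ⟨main, ?_⟩
  calc ∑ ℓ ∈ Finset.Icc 1 k, a ℓ * n ℓ ≤ ∑ ℓ ∈ Finset.Icc 1 k, (N + M) := by
        apply Finset.sum_le_sum
        intro i hi
        simp only [Finset.mem_Icc] at hi
        have hnp := hnpos i hi.1 hi.2
        have := main i hi.1 hi.2
        have h3 : a i * n i ≤ (N / n i + M / n i) * n i :=
          mul_le_mul_of_nonneg_right this (le_of_lt hnp)
        have h4 : (N / n i + M / n i) * n i = N + M := by field_simp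
        linarith
    _ = (k : ℝ) * (N + M) := by
        rw [Finset.sum_const, Nat.card_Icc]
        simp
        ring
end

section
/- Suppose a matching scheme assigns to each pair $(A, B)$ with $A \subseteq U$, $B \subseteq V$, $|A| \le |B|$, an injection $\sigma[A,B] : A \to B$, produced by the round-based algorithm: in each round, unmatched balls and bins are placed on a circle via a fixed hash function for that round, and each ball whose clockwise successor is a bin is matched to it. If $(A', B')$ is obtained from $(A, B)$ by inserting or deleting a single ball or bin, and the algorithm on $(A, B)$ terminates in $T$ rounds, then: (a) for each round $i$, the pair of remaining (unmatched) sets $(A'_i, B'_i)$ for input $(A', B')$ differs from $(A_i, B_i)$ for input $(A, B)$ by exactly one element (one insertion or deletion); (b) the number of rounds $T'$ on input $(A', B')$ satisfies $T' \le T + 1$. -/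
open Set

noncomputable section

/-- The set of ball–bin pairs `(a, b)` matched in one round of the dynamic matching
algorithm: `a ∈ A`, `b ∈ B`, and `b` is the clockwise successor of `a` on the circle
(where `h` gives the positions on the unit circle, i.e. `b` minimizes the clockwise
distance `Int.fract (h c - h (inl a))` among all remaining elements `c ≠ inl a`). -/
def roundMatched {U V : Type} (h : (U ⊕ V) → ℝ) (A : Set U) (B : Set V) :
    Set (U × V) :=
  {p | p.1 ∈ A ∧ p.2 ∈ B ∧
    ∀ c : U ⊕ V, c ∈ (Sum.inl '' A ∪ Sum.inr '' B : Set (U ⊕ V)) → c ≠ Sum.inl p.1 →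
      Int.fract (h (Sum.inr p.2) - h (Sum.inl p.1)) ≤ Int.fract (h c - h (Sum.inl p.1))}

/-- One round of the algorithm: remove all matched balls and bins. -/
def roundStep {U V : Type} (h : (U ⊕ V) → ℝ) (A : Set U) (B : Set V) :
    Set U × Set V :=
  (A \ {a | ∃ b, (a, b) ∈ roundMatched h A B},
   B \ {b | ∃ a, (a, b) ∈ roundMatched h A B})

/-- `run h A B i` is the pair `(Aᵢ₊₁, Bᵢ₊₁)` of remaining unmatched balls and bins
after `i` rounds of the algorithm, where round `i` uses the fixed hash function `h i`. -/
def run {U V : Type} (h : ℕ → (U ⊕ V) → ℝ) (A : Set U) (B : Set V) : ℕ → Set U × Set V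
  | 0 => (A, B)
  | i + 1 => roundStep (h (i + 1)) (run h A B i).1 (run h A B i).2

/-- Two pairs of (ball set, bin set) differ by the insertion or deletion of a single
ball or a single bin. -/
def DiffersByOne {α β : Type} (p q : Set α × Set β) : Prop :=
  (∃ x, x ∉ p.1 ∧ q.1 = insert x p.1 ∧ q.2 = p.2) ∨
  (∃ x, x ∈ p.1 ∧ q.1 = p.1 \ {x} ∧ q.2 = p.2) ∨
  (∃ y, y ∉ p.2 ∧ q.2 = insert y p.2 ∧ q.1 = p.1) ∨
  (∃ y, y ∈ p.2 ∧ q.2 = p.2 \ {y} ∧ q.1 = p.1)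


open Set

section FractLemmas

lemma fract_sub_of_le {α β : ℝ} (hle : Int.fract β ≤ Int.fract α) :
    Int.fract (α - β) = Int.fract α - Int.fract β := by
  rw [Int.fract_eq_iff]
  refine ⟨by linarith, by have h1 := Int.fract_lt_one α; have h2 := Int.fract_nonneg β; linarith,
    ⟨⌊α⌋ - ⌊β⌋, ?_⟩⟩
  simp only [Int.fract]
  push_cast
  ring

lemma fract_sub_of_lt {α β : ℝ} (hlt : Int.fract α < Int.fract β) :
    Int.fract (α - β) = Int.fract α - Int.fract β + 1 := by
  rw [Int.fract_eq_iff]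
  refine ⟨by have h1 := Int.fract_lt_one β; have h2 := Int.fract_nonneg α; linarith,
    by linarith, ⟨⌊α⌋ - ⌊β⌋ - 1, ?_⟩⟩
  simp only [Int.fract]
  push_cast
  ring

end FractLemmas

section Dist

variable {U V : Type} {h : (U ⊕ V) → ℝ}
  (hinj : Function.Injective fun x => Int.fract (h x))

include hinj

lemma d_ne_zero {c e : U ⊕ V} (hne : c ≠ e) : Int.fract (h c - h e) ≠ 0 := by
  intro h0
  apply hne
  apply hinj
  have : ∃ z : ℤ, h c - h e = z := by
    rcases Int.fract_eq_iff.mp h0 with ⟨-, -, z, hz⟩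
    exact ⟨z, by linarith⟩
  exact Int.fract_eq_fract.mpr (by simpa using this)

lemma d_pos {c e : U ⊕ V} (hne : c ≠ e) : 0 < Int.fract (h c - h e) :=
  lt_of_le_of_ne (Int.fract_nonneg _) (Ne.symm (d_ne_zero hinj hne))

lemma d_inj {e c c' : U ⊕ V}
    (heq : Int.fract (h c - h e) = Int.fract (h c' - h e)) : c = c' := by
  apply hinj
  rcases Int.fract_eq_fract.mp heq with ⟨z, hz⟩
  exact Int.fract_eq_fract.mpr ⟨z, by linarith⟩

lemma d_flip {c e : U ⊕ V} (hne : c ≠ e) :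
    Int.fract (h e - h c) = 1 - Int.fract (h c - h e) := by
  rw [show h e - h c = -(h c - h e) by ring, Int.fract_neg (d_ne_zero hinj hne)]

omit hinj in
lemma d_between {e m c : U ⊕ V}
    (h1 : Int.fract (h m - h e) < Int.fract (h c - h e)) :
    Int.fract (h c - h m) = Int.fract (h c - h e) - Int.fract (h m - h e) := by
  rw [show h c - h m = (h c - h e) - (h m - h e) by ring]
  exact fract_sub_of_le h1.le

omit hinj in
lemma d_wrap {e m c : U ⊕ V}
    (h1 : Int.fract (h c - h e) < Int.fract (h m - h e)) :
    Int.fract (h c - h m) = Int.fract (h c - h e) - Int.fract (h m - h e) + 1 := by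
  rw [show h c - h m = (h c - h e) - (h m - h e) by ring]
  exact fract_sub_of_lt h1

/-- Two distinct elements cannot both have `t` as (weak) successor. -/
lemma two_pred_false {e1 e2 t : U ⊕ V} (h12 : e1 ≠ e2) (ht1 : t ≠ e1) (ht2 : t ≠ e2)
    (m1 : Int.fract (h t - h e1) ≤ Int.fract (h e2 - h e1))
    (m2 : Int.fract (h t - h e2) ≤ Int.fract (h e1 - h e2)) : False := by
  have hd1 : 0 < Int.fract (h t - h e1) := d_pos hinj ht1
  have hlt : Int.fract (h t - h e1) < Int.fract (h e2 - h e1) :=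
    lt_of_le_of_ne m1 (fun heq => ht2 (d_inj hinj heq))
  have hw := d_wrap (h := h) (e := e1) (m := e2) (c := t) hlt
  have hf := d_flip hinj (show e2 ≠ e1 from h12.symm)
  rw [hw, hf] at m2
  linarith

end Dist

section Succ

variable {U V : Type} {h : (U ⊕ V) → ℝ}
  (hinj : Function.Injective fun x => Int.fract (h x))
  {S : Set (U ⊕ V)} {x p : U ⊕ V}
  (hx : x ∉ S) (hp : p ∈ S)
  (hpmin : ∀ c ∈ S, Int.fract (h x - h p) ≤ Int.fract (h x - h c))

include hinj hx hp hpmin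

/-- `x` is strictly closer to `p` (clockwise from `p`) than any other element of `S`:
`x` is the successor of `p` in `S ∪ {x}`. -/
lemma succ_px : ∀ c ∈ S, c ≠ p → Int.fract (h x - h p) < Int.fract (h c - h p) := by
  intro c hc hcp
  by_contra hle
  push_neg at hle
  have hcpos : 0 < Int.fract (h c - h p) := d_pos hinj hcp
  rcases lt_or_eq_of_le hle with hlt | heq
  · have hb := d_between (h := h) (e := p) (m := c) (c := x) hlt
    have := hpmin c hc
    linarith
  · have hxc : x = c := d_inj hinj heq.symm
    exact hx (hxc ▸ hc)

/-- If `e ∈ S`, `e ≠ p`, and `t` is (weakly) the successor of `e` in `S`, then `t` is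
still at least as close as `x` from `e`. -/
lemma stab_core {e t : U ⊕ V} (he : e ∈ S) (hep : e ≠ p)
    (htm : ∀ c ∈ S, c ≠ e → Int.fract (h t - h e) ≤ Int.fract (h c - h e)) :
    Int.fract (h t - h e) ≤ Int.fract (h x - h e) := by
  by_contra hlt
  push_neg at hlt
  have hpe : Int.fract (h t - h e) ≤ Int.fract (h p - h e) := htm p hp (Ne.symm hep)
  have hxp : Int.fract (h x - h e) < Int.fract (h p - h e) := lt_of_lt_of_le hlt hpe
  have hb := d_between (h := h) (e := e) (m := x) (c := p) hxp
  have hxpS : x ≠ p := fun hq => hx (hq ▸ hp)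
  have hf := d_flip hinj (show p ≠ x from (Ne.symm hxpS))
  -- fract (h x - h p) = 1 - fract (h p - h x)
  have hm := hpmin e he
  have h1 := Int.fract_lt_one (h p - h e)
  have h0 := Int.fract_nonneg (h x - h e)
  rw [hf, hb] at hm
  linarith

/-- If `s₀` is the successor of `p` in `S`, then `s₀` is the successor of `x`
in `insert x S`. -/
lemma x_succ {s₀ : U ⊕ V} (hs₀ : s₀ ∈ S) (hs₀p : s₀ ≠ p)
    (hs₀min : ∀ c ∈ S, c ≠ p → Int.fract (h s₀ - h p) ≤ Int.fract (h c - h p)) :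
    ∀ c ∈ insert x S, c ≠ x → Int.fract (h s₀ - h x) ≤ Int.fract (h c - h x) := by
  have hform : ∀ c ∈ S, c ≠ p →
      Int.fract (h c - h x) = Int.fract (h c - h p) - Int.fract (h x - h p) := by
    intro c hc hcp
    exact d_between (h := h) (e := p) (m := x) (c := c)
      (succ_px hinj hx hp hpmin c hc hcp)
  intro c hc hcx
  rcases Set.mem_insert_iff.mp hc with rfl | hcS
  · exact absurd rfl hcx
  by_cases hcp : c = p
  · subst hcp
    have hxc : x ≠ c := fun hq => hx (hq ▸ hcS)
    have hf := d_flip hinj hxc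
    rw [hf, hform s₀ hs₀ hs₀p]
    have := Int.fract_lt_one (h s₀ - h c)
    linarith
  · rw [hform c hcS hcp, hform s₀ hs₀ hs₀p]
    have := hs₀min c hcS hcp
    linarith

/-- The successor of `x` in `insert x S` is unique: any minimizer equals `s₀`. -/
lemma x_succ_eq {s₀ t : U ⊕ V} (hs₀ : s₀ ∈ S) (hs₀p : s₀ ≠ p)
    (hs₀min : ∀ c ∈ S, c ≠ p → Int.fract (h s₀ - h p) ≤ Int.fract (h c - h p))
    (ht : t ∈ insert x S) (htx : t ≠ x)
    (htmin : ∀ c ∈ insert x S, c ≠ x → Int.fract (h t - h x) ≤ Int.fract (h c - h x)) :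
    t = s₀ := by
  have h1 := htmin s₀ (Set.mem_insert_of_mem _ hs₀) (fun hq => hx (hq ▸ hs₀))
  have h2 := x_succ hinj hx hp hpmin hs₀ hs₀p hs₀min t ht htx
  exact d_inj hinj (le_antisymm h1 h2)

/-- `x` is (weakly) the successor of `p` in `insert x S`. -/
lemma p_succ_x : ∀ c ∈ insert x S, c ≠ p →
    Int.fract (h x - h p) ≤ Int.fract (h c - h p) := by
  intro c hc hcp
  rcases Set.mem_insert_iff.mp hc with rfl | hcS
  · exact le_refl _
  · exact (succ_px hinj hx hp hpmin c hcS hcp).le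

end Succ

section Matching

variable {U V : Type} {h : (U ⊕ V) → ℝ}

lemma mem_S_inl {A : Set U} {B : Set V} {a : U} (ha : a ∈ A) :
    Sum.inl a ∈ (Sum.inl '' A ∪ Sum.inr '' B : Set (U ⊕ V)) :=
  Set.mem_union_left _ ⟨a, ha, rfl⟩

lemma mem_S_inr {A : Set U} {B : Set V} {b : V} (hb : b ∈ B) :
    Sum.inr b ∈ (Sum.inl '' A ∪ Sum.inr '' B : Set (U ⊕ V)) :=
  Set.mem_union_right _ ⟨b, hb, rfl⟩

lemma roundMatched_def {A : Set U} {B : Set V} {a : U} {b : V} :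
    (a, b) ∈ roundMatched h A B ↔ a ∈ A ∧ b ∈ B ∧
      ∀ c : U ⊕ V, c ∈ (Sum.inl '' A ∪ Sum.inr '' B : Set (U ⊕ V)) → c ≠ Sum.inl a →
        Int.fract (h (Sum.inr b) - h (Sum.inl a)) ≤ Int.fract (h c - h (Sum.inl a)) :=
  Iff.rfl

variable (hinj : Function.Injective fun x => Int.fract (h x))

include hinj

lemma succ_unique {A : Set U} {B : Set V} {a : U} {b1 b2 : V}
    (h1 : (a, b1) ∈ roundMatched h A B) (h2 : (a, b2) ∈ roundMatched h A B) :
    b1 = b2 := by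
  obtain ⟨-, hb1, m1⟩ := roundMatched_def.mp h1
  obtain ⟨-, hb2, m2⟩ := roundMatched_def.mp h2
  have e1 := m1 (Sum.inr b2) (mem_S_inr hb2) (by simp)
  have e2 := m2 (Sum.inr b1) (mem_S_inr hb1) (by simp)
  have := d_inj hinj (le_antisymm e1 e2)
  exact Sum.inr.inj this

lemma pred_unique {A : Set U} {B : Set V} {a1 a2 : U} {b : V}
    (h1 : (a1, b) ∈ roundMatched h A B) (h2 : (a2, b) ∈ roundMatched h A B) :
    a1 = a2 := by
  by_contra hne
  obtain ⟨ha1, hb, m1⟩ := roundMatched_def.mp h1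
  obtain ⟨ha2, -, m2⟩ := roundMatched_def.mp h2
  exact two_pred_false hinj (e1 := Sum.inl a1) (e2 := Sum.inl a2) (t := Sum.inr b)
    (fun q => hne (Sum.inl.inj q)) (by simp) (by simp)
    (m1 (Sum.inl a2) (mem_S_inl ha2) (fun q => hne (Sum.inl.inj q).symm))
    (m2 (Sum.inl a1) (mem_S_inl ha1) (fun q => hne (Sum.inl.inj q)))

end Matching

section Key

variable {U V : Type} {h : (U ⊕ V) → ℝ}
  (hinj : Function.Injective fun x => Int.fract (h x))

include hinj

/-- If the matchings agree, and `u` is never matched, inserting the ball `u` just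
inserts `u` into the leftover balls. -/
lemma insert_ball_of_Meq {A : Set U} {B : Set V} {u : U} (hu : u ∉ A)
    (Meq : ∀ a b, (a, b) ∈ roundMatched h (insert u A) B ↔ (a, b) ∈ roundMatched h A B) :
    DiffersByOne (roundStep h A B) (roundStep h (insert u A) B) := by
  have hnou : ∀ b, (u, b) ∈ roundMatched h (insert u A) B → False := by
    intro b hb
    exact hu (roundMatched_def.mp ((Meq u b).mp hb)).1
  refine Or.inl ⟨u, fun hq => hu hq.1, ?_, ?_⟩
  · ext z
    simp only [roundStep, Set.mem_diff, Set.mem_insert_iff, Set.mem_setOf_eq]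
    constructor
    · rintro ⟨(rfl | hzA), hz2⟩
      · exact Or.inl rfl
      · exact Or.inr ⟨hzA, fun hq => by
          obtain ⟨b, hb⟩ := hq; exact hz2 ⟨b, (Meq z b).mpr hb⟩⟩
    · rintro (rfl | ⟨hzA, hz2⟩)
      · exact ⟨Or.inl rfl, fun hq => by obtain ⟨b, hb⟩ := hq; exact hnou b hb⟩
      · exact ⟨Or.inr hzA, fun hq => by
          obtain ⟨b, hb⟩ := hq; exact hz2 ⟨b, (Meq z b).mp hb⟩⟩
  · ext z
    simp only [roundStep, Set.mem_diff, Set.mem_setOf_eq]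
    constructor
    · rintro ⟨hzB, hz2⟩
      exact ⟨hzB, fun hq => by obtain ⟨a, ha⟩ := hq; exact hz2 ⟨a, (Meq a z).mpr ha⟩⟩
    · rintro ⟨hzB, hz2⟩
      exact ⟨hzB, fun hq => by obtain ⟨a, ha⟩ := hq; exact hz2 ⟨a, (Meq a z).mp ha⟩⟩

lemma key_insert_ball {A : Set U} {B : Set V} (hA : A.Finite) (hB : B.Finite)
    {u : U} (hu : u ∉ A) :
    DiffersByOne (roundStep h A B) (roundStep h (insert u A) B) := by
  have hSfin : (Sum.inl '' A ∪ Sum.inr '' B : Set (U ⊕ V)).Finite :=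
    (hA.image _).union (hB.image _)
  have hxS : Sum.inl u ∉ (Sum.inl '' A ∪ Sum.inr '' B : Set (U ⊕ V)) := by
    simp [hu]
  have hS' : Sum.inl '' (insert u A) ∪ Sum.inr '' B
      = insert (Sum.inl u) (Sum.inl '' A ∪ Sum.inr '' B : Set (U ⊕ V)) := by
    rw [Set.image_insert_eq, Set.insert_union]
  have mono : ∀ a b, (a, b) ∈ roundMatched h (insert u A) B → a ≠ u →
      (a, b) ∈ roundMatched h A B := by
    intro a b hm hne
    obtain ⟨ha, hb, hmin⟩ := roundMatched_def.mp hm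
    exact roundMatched_def.mpr ⟨(Set.mem_insert_iff.mp ha).resolve_left hne, hb,
      fun c hc hcne => hmin c (by rw [hS']; exact Set.mem_insert_of_mem _ hc) hcne⟩
  rcases (Sum.inl '' A ∪ Sum.inr '' B : Set (U ⊕ V)).eq_empty_or_nonempty with hSe | hSne
  · -- both sets empty
    have hA0 : A = ∅ := by
      ext a
      simp only [Set.mem_empty_iff_false, iff_false]
      intro ha
      exact (hSe ▸ mem_S_inl (B := B) ha : Sum.inl a ∈ (∅ : Set (U ⊕ V)))
    have hB0 : B = ∅ := by
      ext b
      simp only [Set.mem_empty_iff_false, iff_false]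
      intro hb
      exact (hSe ▸ mem_S_inr (A := A) hb : Sum.inr b ∈ (∅ : Set (U ⊕ V)))
    subst hA0; subst hB0
    refine insert_ball_of_Meq hinj hu ?_
    intro a b
    constructor
    · intro hm; exact absurd (roundMatched_def.mp hm).2.1 (Set.notMem_empty b)
    · intro hm; exact absurd (roundMatched_def.mp hm).2.1 (Set.notMem_empty b)
  obtain ⟨p, hpS, hpmin⟩ := Set.exists_min_image _
    (fun c => Int.fract (h (Sum.inl u) - h c)) hSfin hSne
  have stab : ∀ a b, (a, b) ∈ roundMatched h A B → Sum.inl a ≠ p →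
      (a, b) ∈ roundMatched h (insert u A) B := by
    intro a b hm hne
    obtain ⟨ha, hb, hmin⟩ := roundMatched_def.mp hm
    refine roundMatched_def.mpr ⟨Set.mem_insert_of_mem _ ha, hb, ?_⟩
    intro c hc hcne
    rcases Set.mem_insert_iff.mp (by rw [hS'] at hc; exact hc) with rfl | hcS
    · exact stab_core hinj hxS hpS hpmin (mem_S_inl ha) hne hmin
    · exact hmin c hcS hcne
  rcases hpS' : hpS with ⟨a₀, ha₀, rfl⟩ | ⟨b₀, hb₀, rfl⟩
  · -- predecessor of u is the ball a₀
    by_cases hm₀ : ∃ b₀, (a₀, b₀) ∈ roundMatched h A B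
    · -- a₀ was matched to b₀; now u steals b₀ and a₀ becomes unmatched
      obtain ⟨b₀, hmab⟩ := hm₀
      obtain ⟨-, hb₀B, hmin₀⟩ := roundMatched_def.mp hmab
      have hub₀ : (u, b₀) ∈ roundMatched h (insert u A) B := by
        refine roundMatched_def.mpr ⟨Set.mem_insert _ _, hb₀B, ?_⟩
        intro c hc hcne
        exact x_succ hinj hxS hpS hpmin (mem_S_inr hb₀B) (by simp) hmin₀ c
          (by rw [hS'] at hc; exact hc) hcne
      have ha₀un : ∀ b, (a₀, b) ∈ roundMatched h (insert u A) B → False := by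
        intro b hmem
        obtain ⟨-, hbB, hmin⟩ := roundMatched_def.mp hmem
        have h1 := hmin (Sum.inl u) (by rw [hS']; exact Set.mem_insert _ _)
          (fun q => hu (by rw [Sum.inl.inj q]; exact ha₀))
        have h2 := succ_px hinj hxS hpS hpmin (Sum.inr b) (mem_S_inr hbB) (by simp)
        linarith
      have Mchar : ∀ a b, (a, b) ∈ roundMatched h (insert u A) B ↔
          ((a, b) ∈ roundMatched h A B ∧ a ≠ a₀) ∨ (a = u ∧ b = b₀) := by
        intro a b
        constructor
        · intro hmem
          by_cases hau : a = u
          · subst hau; exact Or.inr ⟨rfl, succ_unique hinj hmem hub₀⟩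
          · refine Or.inl ⟨mono a b hmem hau, fun q => ha₀un b (q ▸ hmem)⟩
        · rintro (⟨hM, hne⟩ | ⟨rfl, rfl⟩)
          · exact stab a b hM (fun q => hne (Sum.inl.inj q))
          · exact hub₀
      refine Or.inl ⟨a₀, fun hq => hq.2 ⟨b₀, hmab⟩, ?_, ?_⟩
      · ext z
        simp only [roundStep, Set.mem_diff, Set.mem_insert_iff, Set.mem_setOf_eq]
        constructor
        · rintro ⟨(rfl | hzA), hz2⟩
          · exact absurd ⟨b₀, hub₀⟩ hz2
          · by_cases hza : z = a₀
            · exact Or.inl hza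
            · exact Or.inr ⟨hzA, fun hq => by
                obtain ⟨b, hb⟩ := hq
                exact hz2 ⟨b, (Mchar z b).mpr (Or.inl ⟨hb, hza⟩)⟩⟩
        · rintro (rfl | ⟨hzA, hz2⟩)
          · refine ⟨Or.inr ha₀, fun hq => ?_⟩
            obtain ⟨b, hb⟩ := hq
            rcases (Mchar z b).mp hb with ⟨-, hne⟩ | ⟨hq2, -⟩
            · exact hne rfl
            · exact hu (hq2 ▸ ha₀)
          · refine ⟨Or.inr hzA, fun hq => ?_⟩
            obtain ⟨b, hb⟩ := hq
            rcases (Mchar z b).mp hb with ⟨hM, -⟩ | ⟨rfl, -⟩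
            · exact hz2 ⟨b, hM⟩
            · exact hu hzA
      · ext z
        simp only [roundStep, Set.mem_diff, Set.mem_setOf_eq]
        constructor
        · rintro ⟨hzB, hz2⟩
          refine ⟨hzB, fun hq => ?_⟩
          obtain ⟨a, ha⟩ := hq
          by_cases haa : a = a₀
          · subst haa
            have hzb : z = b₀ := succ_unique hinj ha hmab
            subst hzb
            exact hz2 ⟨u, hub₀⟩
          · exact hz2 ⟨a, stab a z ha (fun q => haa (Sum.inl.inj q))⟩
        · rintro ⟨hzB, hz2⟩
          refine ⟨hzB, fun hq => ?_⟩
          obtain ⟨a, ha⟩ := hq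
          rcases (Mchar a z).mp ha with ⟨hM, -⟩ | ⟨rfl, rfl⟩
          · exact hz2 ⟨a, hM⟩
          · exact hz2 ⟨a₀, hmab⟩
    · -- a₀ was unmatched; u is inserted right after a₀ and stays unmatched
      refine insert_ball_of_Meq hinj hu ?_
      have hnou : ∀ b, (u, b) ∈ roundMatched h (insert u A) B → False := by
        intro b hmem
        obtain ⟨-, hbB, hmin⟩ := roundMatched_def.mp hmem
        obtain ⟨s₀, hs₀mem, hs₀min⟩ := Set.exists_min_image
          ((Sum.inl '' A ∪ Sum.inr '' B : Set (U ⊕ V)) \ {Sum.inl a₀})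
          (fun c => Int.fract (h c - h (Sum.inl a₀))) hSfin.diff
          ⟨Sum.inr b, mem_S_inr hbB, by simp⟩
        have hs₀min' : ∀ c ∈ (Sum.inl '' A ∪ Sum.inr '' B : Set (U ⊕ V)),
            c ≠ Sum.inl a₀ → Int.fract (h s₀ - h (Sum.inl a₀)) ≤
              Int.fract (h c - h (Sum.inl a₀)) :=
          fun c hc hcp => hs₀min c ⟨hc, by simpa using hcp⟩
        have htb : Sum.inr b = s₀ := x_succ_eq hinj hxS hpS hpmin hs₀mem.1
          (by simpa using hs₀mem.2) hs₀min'
          (Set.mem_insert_of_mem _ (mem_S_inr hbB)) (by simp)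
          (fun c hc hcx => hmin c (by rw [hS']; exact hc) hcx)
        refine hm₀ ⟨b, roundMatched_def.mpr ⟨ha₀, hbB, ?_⟩⟩
        intro c hc hcne
        rw [htb]
        exact hs₀min' c hc hcne
      intro a b
      constructor
      · intro hmem
        by_cases hau : a = u
        · subst hau; exact absurd hmem (fun q => hnou b q)
        · exact mono a b hmem hau
      · intro hM
        by_cases haa : a = a₀
        · subst haa; exact absurd ⟨b, hM⟩ hm₀
        · exact stab a b hM (fun q => haa (Sum.inl.inj q))
  · -- predecessor of u is the bin b₀
    have stab2 : ∀ a b, (a, b) ∈ roundMatched h A B →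
        (a, b) ∈ roundMatched h (insert u A) B :=
      fun a b hM => stab a b hM (by simp)
    by_cases hrest : ((Sum.inl '' A ∪ Sum.inr '' B : Set (U ⊕ V))
        \ {Sum.inr b₀}).Nonempty
    · obtain ⟨s₀, hs₀mem, hs₀min⟩ := Set.exists_min_image _
        (fun c => Int.fract (h c - h (Sum.inr b₀))) hSfin.diff hrest
      have hs₀p : s₀ ≠ Sum.inr b₀ := by simpa using hs₀mem.2
      have hs₀min' : ∀ c ∈ (Sum.inl '' A ∪ Sum.inr '' B : Set (U ⊕ V)),
          c ≠ Sum.inr b₀ → Int.fract (h s₀ - h (Sum.inr b₀)) ≤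
            Int.fract (h c - h (Sum.inr b₀)) :=
        fun c hc hcp => hs₀min c ⟨hc, by simpa using hcp⟩
      have hs₀S := hs₀mem.1
      rcases hs₀S' : hs₀S with ⟨a₁, ha₁, rfl⟩ | ⟨b₁, hb₁, rfl⟩
      · -- successor of b₀ is a ball: u stays unmatched
        refine insert_ball_of_Meq hinj hu ?_
        have hnou : ∀ b, (u, b) ∈ roundMatched h (insert u A) B → False := by
          intro b hmem
          obtain ⟨-, hbB, hmin⟩ := roundMatched_def.mp hmem
          have htb : Sum.inr b = Sum.inl a₁ := x_succ_eq hinj hxS hpS hpmin hs₀S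
            hs₀p hs₀min' (Set.mem_insert_of_mem _ (mem_S_inr hbB)) (by simp)
            (fun c hc hcx => hmin c (by rw [hS']; exact hc) hcx)
          cases htb
        intro a b
        constructor
        · intro hmem
          by_cases hau : a = u
          · subst hau; exact absurd hmem (fun q => hnou b q)
          · exact mono a b hmem hau
        · intro hM
          exact stab2 a b hM
      · -- successor of b₀ is the bin b₁: u gets matched to b₁
        have hub₁ : (u, b₁) ∈ roundMatched h (insert u A) B := by
          refine roundMatched_def.mpr ⟨Set.mem_insert _ _, hb₁, ?_⟩
          intro c hc hcne
          exact x_succ hinj hxS hpS hpmin hs₀S hs₀p hs₀min' c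
            (by rw [hS'] at hc; exact hc) hcne
        have hb₁un : ∀ a, (a, b₁) ∈ roundMatched h A B → False := by
          intro a hab
          obtain ⟨haA, -, hmin⟩ := roundMatched_def.mp hab
          exact two_pred_false hinj (e1 := Sum.inl a) (e2 := Sum.inr b₀)
            (t := Sum.inr b₁) (by simp) (by simp) hs₀p
            (hmin (Sum.inr b₀) (mem_S_inr hb₀) (by simp))
            (hs₀min' (Sum.inl a) (mem_S_inl haA) (by simp))
        have Mchar : ∀ a b, (a, b) ∈ roundMatched h (insert u A) B ↔
            (a, b) ∈ roundMatched h A B ∨ (a = u ∧ b = b₁) := by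
          intro a b
          constructor
          · intro hmem
            by_cases hau : a = u
            · subst hau; exact Or.inr ⟨rfl, succ_unique hinj hmem hub₁⟩
            · exact Or.inl (mono a b hmem hau)
          · rintro (hM | ⟨rfl, rfl⟩)
            · exact stab2 a b hM
            · exact hub₁
        refine Or.inr (Or.inr (Or.inr ⟨b₁, ⟨hb₁, fun hq => ?_⟩, ?_, ?_⟩))
        · obtain ⟨a, ha⟩ := hq
          exact hb₁un a ha
        · ext z
          simp only [roundStep, Set.mem_diff, Set.mem_setOf_eq,
            Set.mem_singleton_iff]
          constructor
          · rintro ⟨hzB, hz2⟩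
            refine ⟨⟨hzB, fun hq => ?_⟩, fun hq => ?_⟩
            · obtain ⟨a, ha⟩ := hq; exact hz2 ⟨a, stab2 a z ha⟩
            · subst hq; exact hz2 ⟨u, hub₁⟩
          · rintro ⟨⟨hzB, hz2⟩, hzb⟩
            refine ⟨hzB, fun hq => ?_⟩
            obtain ⟨a, ha⟩ := hq
            rcases (Mchar a z).mp ha with hM | ⟨-, rfl⟩
            · exact hz2 ⟨a, hM⟩
            · exact hzb rfl
        · ext z
          simp only [roundStep, Set.mem_diff, Set.mem_insert_iff, Set.mem_setOf_eq]
          constructor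
          · rintro ⟨(rfl | hzA), hz2⟩
            · exact absurd ⟨b₁, hub₁⟩ hz2
            · exact ⟨hzA, fun hq => by
                obtain ⟨b, hb⟩ := hq; exact hz2 ⟨b, stab2 z b hb⟩⟩
          · rintro ⟨hzA, hz2⟩
            refine ⟨Or.inr hzA, fun hq => ?_⟩
            obtain ⟨b, hb⟩ := hq
            rcases (Mchar z b).mp hb with hM | ⟨rfl, -⟩
            · exact hz2 ⟨b, hM⟩
            · exact hu hzA
    · -- S = {inr b₀} : A = ∅, B = {b₀}; u gets matched to b₀
      rw [Set.not_nonempty_iff_eq_empty, Set.diff_eq_empty] at hrest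
      have hA0 : A = ∅ := by
        ext a
        simp only [Set.mem_empty_iff_false, iff_false]
        intro ha
        have := hrest (mem_S_inl (B := B) ha)
        simp at this
      have hB0 : B = {b₀} := by
        apply Set.Subset.antisymm
        · intro b hb
          have := hrest (mem_S_inr (A := A) hb)
          simpa using this
        · intro b hb
          rw [Set.mem_singleton_iff] at hb
          rw [hb]
          exact hb₀
      subst hA0; subst hB0
      have hub : (u, b₀) ∈ roundMatched h (insert u ∅) {b₀} := by
        refine roundMatched_def.mpr ⟨Set.mem_insert _ _, rfl, ?_⟩
        intro c hc hcne
        have hcb : c = Sum.inr b₀ := by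
          rcases hc with ⟨a, ha, rfl⟩ | ⟨b, hb, rfl⟩
          · rw [Set.mem_insert_iff] at ha
            simp only [Set.mem_empty_iff_false, or_false] at ha
            subst ha; exact absurd rfl hcne
          · rw [Set.mem_singleton_iff] at hb
            rw [hb]
        rw [hcb]
      refine Or.inr (Or.inr (Or.inr ⟨b₀, ⟨rfl, fun hq => ?_⟩, ?_, ?_⟩))
      · obtain ⟨a, ha⟩ := hq
        exact absurd (roundMatched_def.mp ha).1 (Set.notMem_empty a)
      · ext z
        simp only [roundStep, Set.mem_diff, Set.mem_setOf_eq, Set.mem_singleton_iff]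
        constructor
        · rintro ⟨rfl, hz2⟩
          exact absurd ⟨u, hub⟩ hz2
        · rintro ⟨⟨hz1, -⟩, hzb⟩
          exact absurd hz1 hzb
      · ext z
        simp only [roundStep, Set.mem_diff, Set.mem_insert_iff, Set.mem_setOf_eq]
        constructor
        · rintro ⟨(rfl | hz), hz2⟩
          · exact absurd ⟨b₀, hub⟩ hz2
          · exact absurd hz (Set.notMem_empty z)
        · rintro ⟨hz, -⟩
          exact absurd hz (Set.notMem_empty z)

end Key

section Key2

variable {U V : Type} {h : (U ⊕ V) → ℝ}
  (hinj : Function.Injective fun x => Int.fract (h x))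

include hinj

lemma insert_bin_of_Meq {A : Set U} {B : Set V} {v : V} (hv : v ∉ B)
    (Meq : ∀ a b, (a, b) ∈ roundMatched h A (insert v B) ↔ (a, b) ∈ roundMatched h A B) :
    DiffersByOne (roundStep h A B) (roundStep h A (insert v B)) := by
  have hnov : ∀ a, (a, v) ∈ roundMatched h A (insert v B) → False := by
    intro a ha
    exact hv (roundMatched_def.mp ((Meq a v).mp ha)).2.1
  refine Or.inr (Or.inr (Or.inl ⟨v, fun hq => hv hq.1, ?_, ?_⟩))
  · ext z
    simp only [roundStep, Set.mem_diff, Set.mem_insert_iff, Set.mem_setOf_eq]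
    constructor
    · rintro ⟨(rfl | hzB), hz2⟩
      · exact Or.inl rfl
      · exact Or.inr ⟨hzB, fun hq => by
          obtain ⟨a, ha⟩ := hq; exact hz2 ⟨a, (Meq a z).mpr ha⟩⟩
    · rintro (rfl | ⟨hzB, hz2⟩)
      · exact ⟨Or.inl rfl, fun hq => by obtain ⟨a, ha⟩ := hq; exact hnov a ha⟩
      · exact ⟨Or.inr hzB, fun hq => by
          obtain ⟨a, ha⟩ := hq; exact hz2 ⟨a, (Meq a z).mp ha⟩⟩
  · ext z
    simp only [roundStep, Set.mem_diff, Set.mem_setOf_eq]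
    constructor
    · rintro ⟨hzA, hz2⟩
      exact ⟨hzA, fun hq => by obtain ⟨b, hb⟩ := hq; exact hz2 ⟨b, (Meq z b).mpr hb⟩⟩
    · rintro ⟨hzA, hz2⟩
      exact ⟨hzA, fun hq => by obtain ⟨b, hb⟩ := hq; exact hz2 ⟨b, (Meq z b).mp hb⟩⟩

lemma key_insert_bin {A : Set U} {B : Set V} (hA : A.Finite) (hB : B.Finite)
    {v : V} (hv : v ∉ B) :
    DiffersByOne (roundStep h A B) (roundStep h A (insert v B)) := by
  have hSfin : (Sum.inl '' A ∪ Sum.inr '' B : Set (U ⊕ V)).Finite :=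
    (hA.image _).union (hB.image _)
  have hxS : Sum.inr v ∉ (Sum.inl '' A ∪ Sum.inr '' B : Set (U ⊕ V)) := by
    simp [hv]
  have hS' : Sum.inl '' A ∪ Sum.inr '' (insert v B)
      = insert (Sum.inr v) (Sum.inl '' A ∪ Sum.inr '' B : Set (U ⊕ V)) := by
    rw [Set.image_insert_eq, Set.union_insert]
  have mono : ∀ a b, (a, b) ∈ roundMatched h A (insert v B) → b ≠ v →
      (a, b) ∈ roundMatched h A B := by
    intro a b hm hne
    obtain ⟨ha, hb, hmin⟩ := roundMatched_def.mp hm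
    exact roundMatched_def.mpr ⟨ha, (Set.mem_insert_iff.mp hb).resolve_left hne,
      fun c hc hcne => hmin c (by rw [hS']; exact Set.mem_insert_of_mem _ hc) hcne⟩
  rcases (Sum.inl '' A ∪ Sum.inr '' B : Set (U ⊕ V)).eq_empty_or_nonempty with hSe | hSne
  · have hA0 : A = ∅ := by
      ext a
      simp only [Set.mem_empty_iff_false, iff_false]
      intro ha
      exact (hSe ▸ mem_S_inl (B := B) ha : Sum.inl a ∈ (∅ : Set (U ⊕ V)))
    subst hA0
    refine insert_bin_of_Meq hinj hv ?_
    intro a b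
    constructor
    · intro hm; exact absurd (roundMatched_def.mp hm).1 (Set.notMem_empty a)
    · intro hm; exact absurd (roundMatched_def.mp hm).1 (Set.notMem_empty a)
  obtain ⟨p, hpS, hpmin⟩ := Set.exists_min_image _
    (fun c => Int.fract (h (Sum.inr v) - h c)) hSfin hSne
  have stab : ∀ a b, (a, b) ∈ roundMatched h A B → Sum.inl a ≠ p →
      (a, b) ∈ roundMatched h A (insert v B) := by
    intro a b hm hne
    obtain ⟨ha, hb, hmin⟩ := roundMatched_def.mp hm
    refine roundMatched_def.mpr ⟨ha, Set.mem_insert_of_mem _ hb, ?_⟩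
    intro c hc hcne
    rcases Set.mem_insert_iff.mp (by rw [hS'] at hc; exact hc) with rfl | hcS
    · exact stab_core hinj hxS hpS hpmin (mem_S_inl ha) hne hmin
    · exact hmin c hcS hcne
  rcases hpS' : hpS with ⟨a₀, ha₀, rfl⟩ | ⟨b₀, hb₀, rfl⟩
  · -- predecessor of v is the ball a₀ : a₀ gets matched to v
    have hav : (a₀, v) ∈ roundMatched h A (insert v B) := by
      refine roundMatched_def.mpr ⟨ha₀, Set.mem_insert _ _, ?_⟩
      intro c hc hcne
      exact p_succ_x hinj hxS hpS hpmin c (by rw [hS'] at hc; exact hc) hcne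
    have hpredv : ∀ a, (a, v) ∈ roundMatched h A (insert v B) → a = a₀ :=
      fun a ha => pred_unique hinj ha hav
    have ha₀b : ∀ b, (a₀, b) ∈ roundMatched h A (insert v B) → b = v :=
      fun b hb => succ_unique hinj hb hav
    by_cases hm₀ : ∃ b₀, (a₀, b₀) ∈ roundMatched h A B
    · -- a₀ was matched to b₀, which becomes free: insert bin b₀
      obtain ⟨b₀, hmab⟩ := hm₀
      have hb₀B : b₀ ∈ B := (roundMatched_def.mp hmab).2.1
      have hb₀v : b₀ ≠ v := fun q => hv (q ▸ hb₀B)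
      have hb₀un : ∀ a, (a, b₀) ∈ roundMatched h A (insert v B) → False := by
        intro a hab
        have hM : (a, b₀) ∈ roundMatched h A B := mono a b₀ hab hb₀v
        have haa : a = a₀ := pred_unique hinj hM hmab
        subst haa
        exact hb₀v (ha₀b b₀ hab)
      have Mchar : ∀ a b, (a, b) ∈ roundMatched h A (insert v B) ↔
          ((a, b) ∈ roundMatched h A B ∧ a ≠ a₀) ∨ (a = a₀ ∧ b = v) := by
        intro a b
        constructor
        · intro hmem
          by_cases hbv : b = v
          · subst hbv; exact Or.inr ⟨hpredv a hmem, rfl⟩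
          · exact Or.inl ⟨mono a b hmem hbv, fun q => hbv (ha₀b b (q ▸ hmem))⟩
        · rintro (⟨hM, hne⟩ | ⟨rfl, rfl⟩)
          · exact stab a b hM (fun q => hne (Sum.inl.inj q))
          · exact hav
      refine Or.inr (Or.inr (Or.inl ⟨b₀, fun hq => hq.2 ⟨a₀, hmab⟩, ?_, ?_⟩))
      · ext z
        simp only [roundStep, Set.mem_diff, Set.mem_insert_iff, Set.mem_setOf_eq]
        constructor
        · rintro ⟨(rfl | hzB), hz2⟩
          · exact absurd ⟨a₀, hav⟩ hz2
          · by_cases hzb : z = b₀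
            · exact Or.inl hzb
            · refine Or.inr ⟨hzB, fun hq => ?_⟩
              obtain ⟨a, ha⟩ := hq
              by_cases haa : a = a₀
              · subst haa; exact hzb (succ_unique hinj ha hmab)
              · exact hz2 ⟨a, stab a z ha (fun q => haa (Sum.inl.inj q))⟩
        · rintro (rfl | ⟨hzB, hz2⟩)
          · refine ⟨Or.inr hb₀B, fun hq => ?_⟩
            obtain ⟨a, ha⟩ := hq
            exact hb₀un a ha
          · refine ⟨Or.inr hzB, fun hq => ?_⟩
            obtain ⟨a, ha⟩ := hq
            rcases (Mchar a z).mp ha with ⟨hM, -⟩ | ⟨-, rfl⟩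
            · exact hz2 ⟨a, hM⟩
            · exact hv hzB
      · ext z
        simp only [roundStep, Set.mem_diff, Set.mem_setOf_eq]
        constructor
        · rintro ⟨hzA, hz2⟩
          refine ⟨hzA, fun hq => ?_⟩
          obtain ⟨b, hb⟩ := hq
          by_cases hza : z = a₀
          · subst hza; exact hz2 ⟨v, hav⟩
          · exact hz2 ⟨b, stab z b hb (fun q => hza (Sum.inl.inj q))⟩
        · rintro ⟨hzA, hz2⟩
          refine ⟨hzA, fun hq => ?_⟩
          obtain ⟨b, hb⟩ := hq
          rcases (Mchar z b).mp hb with ⟨hM, -⟩ | ⟨rfl, -⟩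
          · exact hz2 ⟨b, hM⟩
          · exact hz2 ⟨b₀, hmab⟩
    · -- a₀ was unmatched and now matches v: delete ball a₀
      have Mchar : ∀ a b, (a, b) ∈ roundMatched h A (insert v B) ↔
          (a, b) ∈ roundMatched h A B ∨ (a = a₀ ∧ b = v) := by
        intro a b
        constructor
        · intro hmem
          by_cases hbv : b = v
          · subst hbv; exact Or.inr ⟨hpredv a hmem, rfl⟩
          · exact Or.inl (mono a b hmem hbv)
        · rintro (hM | ⟨rfl, rfl⟩)
          · refine stab a b hM (fun q => ?_)
            have haa : a = a₀ := Sum.inl.inj q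
            subst haa
            exact hm₀ ⟨b, hM⟩
          · exact hav
      refine Or.inr (Or.inl ⟨a₀, ⟨ha₀, fun hq => hm₀ hq⟩, ?_, ?_⟩)
      · ext z
        simp only [roundStep, Set.mem_diff, Set.mem_setOf_eq, Set.mem_singleton_iff]
        constructor
        · rintro ⟨hzA, hz2⟩
          by_cases hza : z = a₀
          · subst hza; exact absurd ⟨v, hav⟩ hz2
          · refine ⟨⟨hzA, fun hq => ?_⟩, hza⟩
            obtain ⟨b, hb⟩ := hq
            exact hz2 ⟨b, (Mchar z b).mpr (Or.inl hb)⟩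
        · rintro ⟨⟨hzA, hz2⟩, hza⟩
          refine ⟨hzA, fun hq => ?_⟩
          obtain ⟨b, hb⟩ := hq
          rcases (Mchar z b).mp hb with hM | ⟨rfl, -⟩
          · exact hz2 ⟨b, hM⟩
          · exact hza rfl
      · ext z
        simp only [roundStep, Set.mem_diff, Set.mem_insert_iff, Set.mem_setOf_eq]
        constructor
        · rintro ⟨(rfl | hzB), hz2⟩
          · exact absurd ⟨a₀, hav⟩ hz2
          · refine ⟨hzB, fun hq => ?_⟩
            obtain ⟨a, ha⟩ := hq
            by_cases haa : a = a₀
            · subst haa; exact hm₀ ⟨z, ha⟩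
            · exact hz2 ⟨a, stab a z ha (fun q => haa (Sum.inl.inj q))⟩
        · rintro ⟨hzB, hz2⟩
          refine ⟨Or.inr hzB, fun hq => ?_⟩
          obtain ⟨a, ha⟩ := hq
          rcases (Mchar a z).mp ha with hM | ⟨-, rfl⟩
          · exact hz2 ⟨a, hM⟩
          · exact hv hzB
  · -- predecessor of v is a bin: nothing changes, insert bin v
    have hnov : ∀ a, (a, v) ∈ roundMatched h A (insert v B) → False := by
      intro a hav
      obtain ⟨haA, -, hmin⟩ := roundMatched_def.mp hav
      exact two_pred_false hinj (e1 := Sum.inl a) (e2 := Sum.inr b₀)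
        (t := Sum.inr v) (by simp) (by simp)
        (fun q => hv (by rw [Sum.inr.inj q]; exact hb₀))
        (hmin (Sum.inr b₀)
          (by rw [hS']; exact Set.mem_insert_of_mem _ (mem_S_inr hb₀)) (by simp))
        (p_succ_x hinj hxS hpS hpmin (Sum.inl a)
          (Set.mem_insert_of_mem _ (mem_S_inl haA)) (by simp))
    refine insert_bin_of_Meq hinj hv ?_
    intro a b
    constructor
    · intro hmem
      by_cases hbv : b = v
      · subst hbv; exact absurd hmem (fun q => hnov a q)
      · exact mono a b hmem hbv
    · intro hM
      exact stab a b hM (by simp)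

end Key2

section Assemble

lemma differsByOne_symm {α β : Type} {p q : Set α × Set β}
    (hd : DiffersByOne p q) : DiffersByOne q p := by
  rcases hd with ⟨x, hx, h1, h2⟩ | ⟨x, hx, h1, h2⟩ | ⟨y, hy, h1, h2⟩ | ⟨y, hy, h1, h2⟩
  · exact Or.inr (Or.inl ⟨x, by rw [h1]; exact Set.mem_insert _ _,
      by rw [h1, Set.insert_diff_self_of_notMem hx], h2.symm⟩)
  · exact Or.inl ⟨x, by rw [h1]; exact fun hq => hq.2 rfl,
      by rw [h1, Set.insert_diff_singleton, Set.insert_eq_self.mpr hx], h2.symm⟩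
  · exact Or.inr (Or.inr (Or.inr ⟨y, by rw [h1]; exact Set.mem_insert _ _,
      by rw [h1, Set.insert_diff_self_of_notMem hy], h2.symm⟩))
  · exact Or.inr (Or.inr (Or.inl ⟨y, by rw [h1]; exact fun hq => hq.2 rfl,
      by rw [h1, Set.insert_diff_singleton, Set.insert_eq_self.mpr hy], h2.symm⟩))

lemma key_step {U V : Type} {h : (U ⊕ V) → ℝ}
    (hinj : Function.Injective fun x => Int.fract (h x))
    {p q : Set U × Set V} (hp1 : p.1.Finite) (hp2 : p.2.Finite)
    (hd : DiffersByOne p q) :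
    DiffersByOne (roundStep h p.1 p.2) (roundStep h q.1 q.2) := by
  rcases hd with ⟨x, hx, h1, h2⟩ | ⟨x, hx, h1, h2⟩ | ⟨y, hy, h1, h2⟩ | ⟨y, hy, h1, h2⟩
  · rw [h1, h2]
    exact key_insert_ball hinj hp1 hp2 hx
  · rw [h1, h2]
    have hx' : x ∉ p.1 \ {x} := fun hq => hq.2 rfl
    have hkey := key_insert_ball hinj hp1.diff hp2 hx'
    rw [Set.insert_diff_singleton, Set.insert_eq_self.mpr hx] at hkey
    exact differsByOne_symm hkey
  · rw [h1, h2]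
    exact key_insert_bin hinj hp1 hp2 hy
  · rw [h1, h2]
    have hy' : y ∉ p.2 \ {y} := fun hq => hq.2 rfl
    have hkey := key_insert_bin hinj hp1 hp2.diff hy'
    rw [Set.insert_diff_singleton, Set.insert_eq_self.mpr hy] at hkey
    exact differsByOne_symm hkey

lemma run_subsets {U V : Type} (h : ℕ → (U ⊕ V) → ℝ) (A : Set U) (B : Set V) :
    ∀ i, (run h A B i).1 ⊆ A ∧ (run h A B i).2 ⊆ B := by
  intro i
  induction i with
  | zero => exact ⟨subset_rfl, subset_rfl⟩
  | succ n ih =>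
    simp only [run, roundStep]
    exact ⟨Set.diff_subset.trans ih.1, Set.diff_subset.trans ih.2⟩

lemma roundStep_card {U V : Type} {h : (U ⊕ V) → ℝ}
    (hinj : Function.Injective fun x => Int.fract (h x))
    {A : Set U} {B : Set V} (hA : A.Finite) (hB : B.Finite)
    (hc : A.ncard ≤ B.ncard) :
    (roundStep h A B).1.ncard ≤ (roundStep h A B).2.ncard := by
  classical
  have hMA : {a | ∃ b, (a, b) ∈ roundMatched h A B} ⊆ A := by
    rintro a ⟨b, hb⟩; exact (roundMatched_def.mp hb).1
  have hMB : {b | ∃ a, (a, b) ∈ roundMatched h A B} ⊆ B := by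
    rintro b ⟨a, ha⟩; exact (roundMatched_def.mp ha).2.1
  rcases Set.eq_empty_or_nonempty {a | ∃ b, (a, b) ∈ roundMatched h A B} with
    hMAe | ⟨a0, b0, hm0⟩
  · have hMBe : {b | ∃ a, (a, b) ∈ roundMatched h A B} = ∅ := by
      ext b
      simp only [Set.mem_setOf_eq, Set.mem_empty_iff_false, iff_false]
      rintro ⟨a, ha⟩
      exact Set.eq_empty_iff_forall_notMem.mp hMAe a ⟨b, ha⟩
    have e1 : (roundStep h A B).1 = A := by
      show A \ _ = A
      rw [hMAe, Set.diff_empty]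
    have e2 : (roundStep h A B).2 = B := by
      show B \ _ = B
      rw [hMBe, Set.diff_empty]
    rw [e1, e2]
    exact hc
  have hNV : Nonempty V := ⟨b0⟩
  have hf : ∀ a ∈ {a | ∃ b, (a, b) ∈ roundMatched h A B},
      ∃ b, (a, b) ∈ roundMatched h A B := fun a ha => ha
  choose! f hfm using hf
  have hMBeq : {b | ∃ a, (a, b) ∈ roundMatched h A B}
      = f '' {a | ∃ b, (a, b) ∈ roundMatched h A B} := by
    ext b
    constructor
    · rintro ⟨a, ha⟩
      have haMA : a ∈ {a | ∃ b, (a, b) ∈ roundMatched h A B} := ⟨b, ha⟩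
      exact ⟨a, haMA, succ_unique hinj (hfm a haMA) ha⟩
    · rintro ⟨a, haMA, rfl⟩
      exact ⟨a, hfm a haMA⟩
  have hinjOn : Set.InjOn f {a | ∃ b, (a, b) ∈ roundMatched h A B} := by
    intro a1 h1 a2 h2 heq
    exact pred_unique hinj (hfm a1 h1) (heq ▸ hfm a2 h2)
  have hMAfin : {a | ∃ b, (a, b) ∈ roundMatched h A B}.Finite := hA.subset hMA
  have e1 : (roundStep h A B).1.ncard
      = A.ncard - {a | ∃ b, (a, b) ∈ roundMatched h A B}.ncard :=
    Set.ncard_diff hMA hMAfin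
  have e2 : (roundStep h A B).2.ncard
      = B.ncard - {b | ∃ a, (a, b) ∈ roundMatched h A B}.ncard :=
    Set.ncard_diff hMB (hB.subset hMB)
  have e3 : {b | ∃ a, (a, b) ∈ roundMatched h A B}.ncard
      = {a | ∃ b, (a, b) ∈ roundMatched h A B}.ncard := by
    rw [hMBeq]
    exact Set.ncard_image_of_injOn hinjOn
  rw [e1, e2, e3]
  exact Nat.sub_le_sub_right hc _

lemma roundStep_progress {U V : Type} {h : (U ⊕ V) → ℝ}
    (hinj : Function.Injective fun x => Int.fract (h x))
    {A : Set U} {B : Set V} (hA : A.Finite) (hB : B.Finite)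
    (hAne : A.Nonempty) (hBne : B.Nonempty) :
    (roundStep h A B).1.ncard < A.ncard := by
  obtain ⟨pr, hpr, hprmin⟩ := Set.exists_min_image (A ×ˢ B)
    (fun q => Int.fract (h (Sum.inr q.2) - h (Sum.inl q.1))) (hA.prod hB)
    (hAne.prod hBne)
  obtain ⟨a, b⟩ := pr
  have haA : a ∈ A := hpr.1
  have hbB : b ∈ B := hpr.2
  have hmatch : (a, b) ∈ roundMatched h A B := by
    refine roundMatched_def.mpr ⟨haA, hbB, ?_⟩
    intro c hc hcne
    rcases hc with ⟨a', ha', rfl⟩ | ⟨b', hb', rfl⟩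
    · by_contra hlt
      push_neg at hlt
      have h0 : 0 < Int.fract (h (Sum.inl a') - h (Sum.inl a)) := d_pos hinj hcne
      have hbtw := d_between (h := h) (e := Sum.inl a) (m := Sum.inl a')
        (c := Sum.inr b) hlt
      have hmin := hprmin (a', b) ⟨ha', hbB⟩
      simp only at hmin
      rw [hbtw] at hmin
      linarith
    · exact hprmin (a, b') ⟨haA, hb'⟩
  have hsub : (roundStep h A B).1 ⊂ A :=
    (Set.ssubset_iff_of_subset Set.diff_subset).mpr
      ⟨a, haA, fun hq => hq.2 ⟨b, hmatch⟩⟩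
  exact Set.ncard_lt_ncard hsub hA

end Assemble


/-- if `(A', B')` is obtained from `(A, B)` by a single insertion or
deletion, the algorithm on `(A, B)` terminates within `T` rounds, and `T'` is the exact
number of rounds on `(A', B')`, then (a) for each round, the pairs of remaining sets in
the two executions differ by a single element, and (b) `T' ≤ T + 1`. -/
theorem stmt_18 {U V : Type} (h : ℕ → (U ⊕ V) → ℝ)
    (hinj : ∀ i, Function.Injective (fun x => Int.fract (h i x)))
    (A : Set U) (B : Set V) (A' : Set U) (B' : Set V)
    (hAfin : A.Finite) (hBfin : B.Finite) (hA'fin : A'.Finite) (hB'fin : B'.Finite)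
    (hcard : A.ncard ≤ B.ncard) (hcard' : A'.ncard ≤ B'.ncard)
    (hop : DiffersByOne (A, B) (A', B'))
    (T T' : ℕ)
    (hT : (run h A B T).1 = ∅)
    (hT' : (run h A' B' T').1 = ∅)
    (hT'min : ∀ j < T', (run h A' B' j).1 ≠ ∅) :
    (∀ i < max T T', DiffersByOne (run h A B i) (run h A' B' i)) ∧ T' ≤ T + 1 := by
  have hfin : ∀ i, (run h A B i).1.Finite ∧ (run h A B i).2.Finite := fun i =>
    ⟨hAfin.subset (run_subsets h A B i).1, hBfin.subset (run_subsets h A B i).2⟩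
  have hfin' : ∀ i, (run h A' B' i).1.Finite ∧ (run h A' B' i).2.Finite := fun i =>
    ⟨hA'fin.subset (run_subsets h A' B' i).1, hB'fin.subset (run_subsets h A' B' i).2⟩
  have hdiff : ∀ i, DiffersByOne (run h A B i) (run h A' B' i) := by
    intro i
    induction i with
    | zero => exact hop
    | succ n ih => exact key_step (hinj (n + 1)) (hfin n).1 (hfin n).2 ih
  refine ⟨fun i _ => hdiff i, ?_⟩
  by_contra hgt
  push_neg at hgt
  have hT'1 : (run h A' B' T).1 ≠ ∅ := hT'min T (by omega)
  have hT'2 : (run h A' B' (T + 1)).1 ≠ ∅ := hT'min (T + 1) (by omega)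
  have hcard1 : (run h A' B' T).1.ncard ≤ 1 := by
    rcases hdiff T with ⟨x, hx, h1, h2⟩ | ⟨x, hx, h1, h2⟩ | ⟨y, hy, h2, h1⟩ | ⟨y, hy, h2, h1⟩
    · rw [h1, hT]; simp
    · rw [h1, hT]; simp
    · rw [h1, hT]; simp
    · rw [h1, hT]; simp
  have hcardinv : ∀ i, (run h A' B' i).1.ncard ≤ (run h A' B' i).2.ncard := by
    intro i
    induction i with
    | zero => exact hcard'
    | succ n ih => exact roundStep_card (hinj (n + 1)) (hfin' n).1 (hfin' n).2 ih
  have hA'ne : (run h A' B' T).1.Nonempty := Set.nonempty_iff_ne_empty.mpr hT'1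
  have hB'ne : (run h A' B' T).2.Nonempty := by
    have h1 : 0 < (run h A' B' T).1.ncard := (Set.ncard_pos (hfin' T).1).mpr hA'ne
    exact (Set.ncard_pos (hfin' T).2).mp (lt_of_lt_of_le h1 (hcardinv T))
  have hlt : (run h A' B' (T + 1)).1.ncard < (run h A' B' T).1.ncard :=
    roundStep_progress (hinj (T + 1)) (hfin' T).1 (hfin' T).2 hA'ne hB'ne
  have hzero : (run h A' B' (T + 1)).1.ncard = 0 := by omega
  exact hT'2 ((Set.ncard_eq_zero (hfin' (T + 1)).1).mp hzero)

end
end
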